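/- Let n be a positive integer and let S and T be finite subsets of ℚ^n. If the ℝ≥0-span of S and the ℝ≥0-span of T (inside ℝ^n) have a common nonzero element, then the ℚ≥0-span of S and the ℚ≥0-span of T (inside ℚ^n) have a common nonzero element. -/

import Mathlib

/-- The ℚ≥0-span of a set `S ⊆ ℚ^n`: all finite sums `∑ aᵢ • sᵢ` with `aᵢ ∈ ℚ≥0`, `sᵢ ∈ S`. -/
def qSpanQ {n : ℕ} (S : Set (Fin n → ℚ)) : Set (Fin n → ℚ) :=
  {x | ∃ (k : ℕ) (a : Fin k → ℚ) (s : Fin k → (Fin n → ℚ)),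
    (∀ i, s i ∈ S) ∧ (∀ i, 0 ≤ a i) ∧ x = ∑ i, a i • s i}

/-- The inclusion `ℚ^n ⊆ ℝ^n`. -/
def ratToReal {n : ℕ} (v : Fin n → ℚ) : EuclideanSpace ℝ (Fin n) :=
  WithLp.toLp 2 (fun i => (v i : ℝ))

/-- The ℝ≥0-span of a set `S ⊆ ℚ^n`, viewed inside `ℝ^n`. -/
def rSpanQ {n : ℕ} (S : Set (Fin n → ℚ)) : Set (EuclideanSpace ℝ (Fin n)) :=
  {x | ∃ (k : ℕ) (a : Fin k → ℝ) (s : Fin k → (Fin n → ℚ)),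
    (∀ i, s i ∈ S) ∧ (∀ i, 0 ≤ a i) ∧ x = ∑ i, a i • ratToReal (s i)}

/-- If the ℝ≥0-spans of finite sets `S, T ⊆ ℚ^n` share a nonzero element,
then so do their ℚ≥0-spans. -/
lemma real_ker_spanned_by_rat_ker {ι : Type*} [Fintype ι] [DecidableEq ι]
    (L : List (ι → ℚ)) (v : ι → ℝ)
    (hv : ∀ f ∈ L, ∑ l, (f l : ℝ) * v l = 0) :
    ∃ (k : ℕ) (r : Fin k → ℝ) (w : Fin k → ι → ℚ),
      (∀ j, ∀ f ∈ L, ∑ l, f l * w j l = 0) ∧ ∀ l, v l = ∑ j, r j * (w j l : ℝ) := by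
  induction L with
  | nil =>
    refine ⟨Fintype.card ι, fun j => v ((Fintype.equivFin ι).symm j),
      fun j l' => if l' = (Fintype.equivFin ι).symm j then 1 else 0, by simp, fun l => ?_⟩
    have hrw := Fintype.sum_equiv (Fintype.equivFin ι)
      (fun i : ι => v i * (((if l = i then 1 else 0 : ℚ)) : ℝ))
      (fun x => v ((Fintype.equivFin ι).symm x) *
        (((if l = (Fintype.equivFin ι).symm x then 1 else 0 : ℚ)) : ℝ))
      (fun i => by simp)
    rw [show (∑ j, (fun j => v ((Fintype.equivFin ι).symm j)) j *
        (((fun j l' => if l' = (Fintype.equivFin ι).symm j then 1 else 0 : _ → ι → ℚ) j l : ℚ) : ℝ))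
        = ∑ i : ι, v i * (((if l = i then 1 else 0 : ℚ)) : ℝ) from hrw.symm,
      Finset.sum_eq_single l]
    · simp
    · intro i _ hil
      simp [Ne.symm hil]
    · simp
  | cons f L ih =>
    obtain ⟨k, r, w, hw, hv'⟩ := ih (fun g hg => hv g (List.mem_cons_of_mem _ hg))
    have hf : ∑ l, (f l : ℝ) * v l = 0 := hv f List.mem_cons_self
    by_cases hα : ∀ j, ∑ l, f l * w j l = 0
    · refine ⟨k, r, w, fun j g hg => ?_, hv'⟩
      rcases List.mem_cons.1 hg with rfl | hg
      · exact hα j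
      · exact hw j g hg
    · push_neg at hα
      obtain ⟨j0, hj0⟩ := hα
      set α : Fin k → ℚ := fun j => ∑ l, f l * w j l with hαdef
      have hj0' : α j0 ≠ 0 := hj0
      set u : Fin k → ι → ℚ := fun j l => w j l - (α j / α j0) * w j0 l with hudef
      have hsum : ∀ (g : ι → ℚ) (j : Fin k),
          ∑ l, g l * u j l = (∑ l, g l * w j l) - (α j / α j0) * ∑ l, g l * w j0 l := by
        intro g j
        simp only [hudef]
        rw [Finset.mul_sum, ← Finset.sum_sub_distrib]
        exact Finset.sum_congr rfl fun l _ => by ring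
      have key : ∑ j, r j * (α j : ℝ) = 0 := by
        have h2 : ∀ j, r j * (α j : ℝ) = ∑ l, (f l : ℝ) * (r j * (w j l : ℝ)) := by
          intro j
          simp only [hαdef]
          push_cast
          rw [Finset.mul_sum]
          exact Finset.sum_congr rfl fun l _ => by ring
        rw [Finset.sum_congr rfl (fun j _ => h2 j), Finset.sum_comm, ← hf]
        exact Finset.sum_congr rfl fun l _ => by rw [hv' l, Finset.mul_sum]
      refine ⟨k, r, u, fun j g hg => ?_, fun l => ?_⟩
      · rcases List.mem_cons.1 hg with rfl | hg
        · rw [hsum]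
          show α j - (α j / α j0) * α j0 = 0
          field_simp
          ring
        · rw [hsum, hw j g hg, hw j0 g hg]; ring
      · have h3 : ∀ j, r j * (u j l : ℝ) =
            r j * (w j l : ℝ) - (r j * (α j : ℝ)) * ((w j0 l : ℝ) / (α j0 : ℝ)) := by
          intro j
          simp only [hudef]
          push_cast
          ring
        rw [Finset.sum_congr rfl (fun j _ => h3 j), Finset.sum_sub_distrib,
          ← Finset.sum_mul, key, zero_mul, sub_zero, hv' l]

set_option linter.unusedVariables false in
theorem stmt1 (n : ℕ) (hn : 0 < n) (S T : Set (Fin n → ℚ)) (hS : S.Finite) (hT : T.Finite)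
    (h : ∃ x : EuclideanSpace ℝ (Fin n), x ≠ 0 ∧ x ∈ rSpanQ S ∧ x ∈ rSpanQ T) :
    ∃ x : Fin n → ℚ, x ≠ 0 ∧ x ∈ qSpanQ S ∧ x ∈ qSpanQ T := by
  classical
  obtain ⟨x, hx0, ⟨k1, a, s, hsS, ha, hxa⟩, ⟨k2, b, t, htT, hb, hxb⟩⟩ := h
  obtain ⟨m0, hm0⟩ : ∃ m : Fin n, x m ≠ 0 := by
    by_contra hc
    push_neg at hc
    exact hx0 (by ext m; simpa using hc m)
  have hxam : ∀ m, x m = ∑ i, a i * ((s i m : ℚ) : ℝ) := by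
    intro m
    rw [hxa, WithLp.ofLp_sum, Finset.sum_apply m Finset.univ fun i => a i • ratToReal (s i)]
    rfl
  have hxbm : ∀ m, x m = ∑ j, b j * ((t j m : ℚ) : ℝ) := by
    intro m
    rw [hxb, WithLp.ofLp_sum, Finset.sum_apply m Finset.univ fun j => b j • ratToReal (t j)]
    rfl
  set v : Sum (Fin k1) (Fin k2) → ℝ := Sum.elim a b with hvdef
  have hv0 : ∀ l, 0 ≤ v l := by
    rintro (i | j)
    · exact ha i
    · exact hb j
  set fm : Fin n → Sum (Fin k1) (Fin k2) → ℚ :=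
    fun m => Sum.elim (fun i => s i m) (fun j => -(t j m)) with hfmdef
  set L : List (Sum (Fin k1) (Fin k2) → ℚ) :=
    ((List.finRange n).map fm) ++
      ((Finset.univ.filter (fun l : Sum (Fin k1) (Fin k2) => v l = 0)).toList.map
        (fun l0 => fun l => if l = l0 then 1 else 0)) with hLdef
  have hL : ∀ f ∈ L, ∑ l, (f l : ℝ) * v l = 0 := by
    intro f hf
    rcases List.mem_append.1 hf with hf | hf
    · obtain ⟨m, -, rfl⟩ := List.mem_map.1 hf
      rw [Fintype.sum_sum_type]
      simp only [hfmdef, hvdef, Sum.elim_inl, Sum.elim_inr]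
      push_cast
      have h1 : ∑ i, ((s i m : ℚ) : ℝ) * a i = x m := by
        rw [hxam m]; exact Finset.sum_congr rfl fun i _ => mul_comm _ _
      have h2 : ∑ j, (-(t j m : ℝ)) * b j = -(x m) := by
        rw [hxbm m, ← Finset.sum_neg_distrib]
        exact Finset.sum_congr rfl fun j _ => by ring
      rw [h1, h2, add_neg_cancel]
    · obtain ⟨l0, hl0, rfl⟩ := List.mem_map.1 hf
      have hvl0 : v l0 = 0 := (Finset.mem_filter.1 (Finset.mem_toList.1 hl0)).2
      rw [Finset.sum_eq_single l0]
      · simp [hvl0]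
      · intro l _ hll0
        simp [hll0]
      · simp
  obtain ⟨k, r, w, hwL, hvr⟩ := real_ker_spanned_by_rat_ker L v hL
  set φ : (Fin k → ℝ) → Sum (Fin k1) (Fin k2) → ℝ :=
    fun ρ l => ∑ j, ρ j * (w j l : ℝ) with hφdef
  have hφcont : ∀ l, Continuous fun ρ => φ ρ l := by
    intro l
    exact continuous_finset_sum _ fun j _ => (continuous_apply j).mul continuous_const
  set ψ : (Fin k → ℝ) → ℝ := fun ρ => ∑ i, ((s i m0 : ℚ) : ℝ) * φ ρ (Sum.inl i) with hψdef
  have hψcont : Continuous ψ :=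
    continuous_finset_sum _ fun i _ => continuous_const.mul (hφcont (Sum.inl i))
  set U : Set (Fin k → ℝ) :=
    {ρ | ∀ l, 0 < v l → 0 < φ ρ l} ∩ {ρ | ψ ρ ≠ 0} with hUdef
  have hUopen : IsOpen U := by
    refine IsOpen.inter ?_ ?_
    · have : {ρ : Fin k → ℝ | ∀ l, 0 < v l → 0 < φ ρ l}
          = ⋂ l, {ρ | 0 < v l → 0 < φ ρ l} := by
        ext ρ; simp [Set.mem_iInter]
      rw [this]
      refine isOpen_iInter_of_finite fun l => ?_
      by_cases hl : 0 < v l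
      · have : {ρ : Fin k → ℝ | 0 < v l → 0 < φ ρ l} = {ρ | 0 < φ ρ l} := by
          ext ρ; simp [hl]
        rw [this]
        exact isOpen_lt continuous_const (hφcont l)
      · have : {ρ : Fin k → ℝ | 0 < v l → 0 < φ ρ l} = Set.univ := by
          ext ρ; simp [hl]
        rw [this]; exact isOpen_univ
    · exact isOpen_ne_fun hψcont continuous_const
  have hrU : r ∈ U := by
    have hφr : ∀ l, φ r l = v l := fun l => (hvr l).symm
    constructor
    · intro l hl; rw [hφr l]; exact hl
    · show ψ r ≠ 0
      have : ψ r = x m0 := by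
        simp only [hψdef]
        rw [hxam m0]
        exact Finset.sum_congr rfl fun i _ => by rw [hφr (Sum.inl i), hvdef, Sum.elim_inl, mul_comm]
      rw [this]; exact hm0
  have hD : Dense (Set.univ.pi fun _ : Fin k => Set.range ((↑) : ℚ → ℝ)) :=
    dense_pi _ fun i _ => Rat.denseRange_cast
  obtain ⟨ρ, hρD, hρU⟩ := hD.exists_mem_open hUopen ⟨r, hrU⟩
  choose r' hr' using fun j => Set.mem_univ_pi.1 hρD j
  set q : Sum (Fin k1) (Fin k2) → ℚ := fun l => ∑ j, r' j * w j l with hqdef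
  have hqφ : ∀ l, (q l : ℝ) = φ ρ l := by
    intro l
    push_cast [hqdef]
    exact Finset.sum_congr rfl fun j _ => by rw [hr' j]
  have hqker : ∀ f ∈ L, ∑ l, f l * q l = 0 := by
    intro f hf
    have h1 : ∀ l, f l * q l = ∑ j, r' j * (f l * w j l) := by
      intro l
      simp only [hqdef]
      rw [Finset.mul_sum]
      exact Finset.sum_congr rfl fun j _ => by ring
    rw [Finset.sum_congr rfl fun l _ => h1 l, Finset.sum_comm]
    refine Finset.sum_eq_zero fun j _ => ?_
    rw [← Finset.mul_sum, hwL j f hf, mul_zero]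
  -- basic facts about q
  have hqzero : ∀ l, v l = 0 → q l = 0 := by
    intro l0 hl0
    have hmem : (fun l => if l = l0 then 1 else 0) ∈ L := by
      refine List.mem_append.2 (Or.inr (List.mem_map.2 ⟨l0, ?_, rfl⟩))
      exact Finset.mem_toList.2 (Finset.mem_filter.2 ⟨Finset.mem_univ _, hl0⟩)
    have := hqker _ hmem
    rwa [Finset.sum_eq_single l0 (fun l _ hll0 => by simp [hll0]) (by simp), if_pos rfl,
      one_mul] at this
  have hqpos : ∀ l, 0 < v l → 0 < q l := by
    intro l hl
    have : (0 : ℝ) < (q l : ℝ) := by rw [hqφ l]; exact hρU.1 l hl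
    exact_mod_cast this
  have hqnn : ∀ l, 0 ≤ q l := by
    intro l
    rcases (hv0 l).eq_or_lt with he | hlt
    · rw [hqzero l he.symm]
    · exact le_of_lt (hqpos l hlt)
  -- the equations
  have hEq : ∀ m, ∑ i, s i m * q (Sum.inl i) = ∑ j, t j m * q (Sum.inr j) := by
    intro m
    have hmem : fm m ∈ L :=
      List.mem_append.2 (Or.inl (List.mem_map.2 ⟨m, List.mem_finRange m, rfl⟩))
    have := hqker _ hmem
    rw [Fintype.sum_sum_type] at this
    simp only [hfmdef, Sum.elim_inl, Sum.elim_inr, neg_mul] at this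
    rw [Finset.sum_neg_distrib] at this
    linarith [this]
  -- the witness
  refine ⟨∑ i, q (Sum.inl i) • s i, ?_, ?_, ?_⟩
  · intro hzero
    have hx'm0 : (∑ i, q (Sum.inl i) • s i) m0 = ∑ i, q (Sum.inl i) * s i m0 := by
      rw [Finset.sum_apply m0 Finset.univ fun i => q (Sum.inl i) • s i]
      rfl
    have hcast : ((∑ i, q (Sum.inl i) * s i m0 : ℚ) : ℝ) = ψ ρ := by
      push_cast
      simp only [hψdef]
      exact Finset.sum_congr rfl fun i _ => by rw [hqφ (Sum.inl i)]; ring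
    have : ψ ρ = 0 := by
      rw [← hcast, ← hx'm0, hzero]
      norm_num
    exact hρU.2 this
  · exact ⟨k1, fun i => q (Sum.inl i), s, hsS, fun i => hqnn _, rfl⟩
  · refine ⟨k2, fun j => q (Sum.inr j), t, htT, fun j => hqnn _, ?_⟩
    funext m
    rw [Finset.sum_apply m Finset.univ fun i => q (Sum.inl i) • s i,
      Finset.sum_apply m Finset.univ fun j => q (Sum.inr j) • t j]
    have := hEq m
    simp only [Pi.smul_apply, smul_eq_mul]
    calc ∑ i, q (Sum.inl i) * s i m = ∑ i, s i m * q (Sum.inl i) :=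
          Finset.sum_congr rfl fun i _ => mul_comm _ _
      _ = ∑ j, t j m * q (Sum.inr j) := hEq m
      _ = ∑ j, q (Sum.inr j) * t j m := Finset.sum_congr rfl fun j _ => mul_comm _ _
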